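/- Let r > 0 and H be real numbers, and let real numbers Λ, E, p², B, q satisfy the five equations: p² = −2B/(q r³); −E + (H + 5 − 4qB)/(4r) = 0; (2 + H)/r² − Λ = 2B²/r⁴ + E·p²; −H/r² + Λ = −2B²/r⁴ + (H + 1 + 4qB)·p²/(4r); −1/r² + Λ = 2B²/r⁴ + p²/(2r). If p² > 0 then H > −3; if moreover B ≠ 0 and q ≠ 0, then H > 1. -/

import Mathlib

/-- for solutions of the reduced system, p² > 0 forces H > −3
(Berger sphere), and additionally B ≠ 0, q ≠ 0 force H > 1. -/
theorem stmt_4 (r H Λ E p2 B q : ℝ) (hr : 0 < r)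
    (maxwell : p2 = -2 * B / (q * r ^ 3))
    (dirac : -E + (H + 5 - 4 * q * B) / (4 * r) = 0)
    (ein00 : (2 + H) / r ^ 2 - Λ = 2 * B ^ 2 / r ^ 4 + E * p2)
    (ein11 : -H / r ^ 2 + Λ = -2 * B ^ 2 / r ^ 4 + (H + 1 + 4 * q * B) * p2 / (4 * r))
    (ein22 : -1 / r ^ 2 + Λ = 2 * B ^ 2 / r ^ 4 + p2 / (2 * r)) :
    (0 < p2 → -3 < H) ∧ (0 < p2 → B ≠ 0 → q ≠ 0 → 1 < H) := by
  have hrne : r ≠ 0 := hr.ne'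
  field_simp at ein00 ein11 ein22 dirac
  have key1 : 2 * (H + 3) * p2 * r ^ 6 = 8 * r ^ 5 := by
    linear_combination (-(r ^ 3)) * (4 * ein00 + ein11 - r ^ 3 * p2 * dirac)
  constructor
  · intro hp2
    nlinarith [mul_pos hp2 (pow_pos hr 6), pow_pos hr 5, key1]
  · intro hp2 hB hq
    field_simp at maxwell
    have key2 : (H - 1) * (4 * r ^ 5 + p2 * r ^ 6) = 24 * B ^ 2 * r ^ 3 := by
      linear_combination r ^ 3 * (2 * ein22 - ein11 - 4 * B * maxwell)
    have hB2 : 0 < B ^ 2 := by positivity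
    nlinarith [mul_pos hp2 (pow_pos hr 6), pow_pos hr 5, mul_pos hB2 (pow_pos hr 3), key2]
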